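/- Let c₁₂, c₁₃, c₂₃ > 0, k ∈ ℝ, L > 0 and λ₀ = (c₁₃k)²/c₂₃ − 4π²c₁₂/L² > 0. There is no pair (w₁, w₃) of C² functions on [0,L] with w₁(0)=w₁(L)=w₃(0)=w₃(L)=0 solving c₂₃ w₁″ + c₁₃ k w₃′ = 0 and c₁₂ w₃″ − c₁₃ k w₁′ − λ₀ w₃ = λ₀ sin(2πt/L) on [0,L] (transversality: the right-hand side λ₀ sin(2πt/L)e₃ is not in the range of the linearized operator). -/

import Mathlib

open Real

theorem transversality_no_solution
    (c₁₂ c₁₃ c₂₃ k L : ℝ) (h12 : 0 < c₁₂) (h13 : 0 < c₁₃) (h23 : 0 < c₂₃)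
    (hL : 0 < L)
    (lam0 : ℝ) (hlam : lam0 = (c₁₃ * k)^2 / c₂₃ - 4 * π^2 * c₁₂ / L^2)
    (hpos : 0 < lam0) :
    ¬ ∃ w₁ w₃ : ℝ → ℝ,
      ContDiff ℝ 2 w₁ ∧ ContDiff ℝ 2 w₃ ∧
      w₁ 0 = 0 ∧ w₁ L = 0 ∧ w₃ 0 = 0 ∧ w₃ L = 0 ∧
      (∀ t ∈ Set.Icc (0:ℝ) L,
        c₂₃ * deriv (deriv w₁) t + c₁₃ * k * deriv w₃ t = 0 ∧
        c₁₂ * deriv (deriv w₃) t - c₁₃ * k * deriv w₁ t - lam0 * w₃ t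
          = lam0 * sin (2 * π * t / L)) := by
  rintro ⟨w₁, w₃, hw1, hw3, h10, h1L, h30, h3L, heq⟩
  have hLne : L ≠ 0 := hL.ne'
  have h23ne : c₂₃ ≠ 0 := h23.ne'
  have h12ne : c₁₂ ≠ 0 := h12.ne'
  set ω : ℝ := 2 * π / L with hω
  have hωpos : 0 < ω := by positivity
  have hωne : ω ≠ 0 := hωpos.ne'
  have hωL : ω * L = 2 * π := by rw [hω]; field_simp
  -- differentiability facts
  have hw1two : ContDiff ℝ ((1 : WithTop ℕ∞) + 1) w₁ := by exact_mod_cast hw1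
  have hw3two : ContDiff ℝ ((1 : WithTop ℕ∞) + 1) w₃ := by exact_mod_cast hw3
  have hw1d : Differentiable ℝ w₁ := (contDiff_succ_iff_deriv.mp hw1two).1
  have hw3d : Differentiable ℝ w₃ := (contDiff_succ_iff_deriv.mp hw3two).1
  have hw1' : ContDiff ℝ 1 (deriv w₁) := (contDiff_succ_iff_deriv.mp hw1two).2.2
  have hw3' : ContDiff ℝ 1 (deriv w₃) := (contDiff_succ_iff_deriv.mp hw3two).2.2
  have hw1'd : Differentiable ℝ (deriv w₁) := hw1'.differentiable one_ne_zero
  have hw3'd : Differentiable ℝ (deriv w₃) := hw3'.differentiable one_ne_zero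
  have hw3''c : Continuous (deriv (deriv w₃)) := hw3'.continuous_deriv le_rfl
  -- first equation integrated: c₂₃ w₁' + c₁₃ k w₃ is constant on [0,L]
  set C : ℝ := c₂₃ * deriv w₁ 0 + c₁₃ * k * w₃ 0 with hC
  have hconst : ∀ t ∈ Set.Icc (0:ℝ) L,
      c₂₃ * deriv w₁ t + c₁₃ * k * w₃ t = C := by
    intro t ht
    refine constant_of_has_deriv_right_zero
      (f := fun s => c₂₃ * deriv w₁ s + c₁₃ * k * w₃ s) (a := 0) (b := L)
      (((continuous_const.mul hw1'.continuous).add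
        (continuous_const.mul hw3d.continuous)).continuousOn) ?_ t ht
    intro x hx
    have hx' : x ∈ Set.Icc (0:ℝ) L := ⟨hx.1, hx.2.le⟩
    have hd : HasDerivAt (fun s => c₂₃ * deriv w₁ s + c₁₃ * k * w₃ s)
        (c₂₃ * deriv (deriv w₁) x + c₁₃ * k * deriv w₃ x) x :=
      ((hw1'd x).hasDerivAt.const_mul c₂₃).add ((hw3d x).hasDerivAt.const_mul (c₁₃ * k))
    rw [(heq x hx').1] at hd
    exact hd.hasDerivWithinAt
  set D : ℝ := c₁₃ * k * C / c₂₃ with hD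
  -- the reduced ODE for w₃
  have key : ∀ t ∈ Set.Icc (0:ℝ) L,
      (deriv (deriv w₃) t + ω ^ 2 * w₃ t) * sin (ω * t)
        = (lam0 * sin (ω * t) + D) * sin (ω * t) / c₁₂ := by
    intro t ht
    have e2 := (heq t ht).2
    have hc := hconst t ht
    have harg : 2 * π * t / L = ω * t := by rw [hω]; ring
    rw [harg] at e2
    have hω2 : ω ^ 2 = 4 * π ^ 2 / L ^ 2 := by rw [hω]; ring
    have hmain : deriv (deriv w₃) t + ω ^ 2 * w₃ t
        = (lam0 * sin (ω * t) + D) / c₁₂ := by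
      have hd1 : deriv w₁ t = (C - c₁₃ * k * w₃ t) / c₂₃ := by
        rw [eq_div_iff h23ne]; linarith [hc]
      rw [eq_div_iff h12ne]
      linear_combination e2 + (c₁₃ * k) * hd1 + w₃ t * hlam
        + (c₁₂ * w₃ t) * hω2 - hD
    rw [hmain]; ring
  -- derivatives of sin(ωt), cos(ωt)
  have hsin : ∀ t : ℝ, HasDerivAt (fun s => sin (ω * s)) (ω * cos (ω * t)) t := by
    intro t
    have := ((hasDerivAt_id' (x := t)).const_mul ω).sin
    convert this using 1
    ring
  have hcos : ∀ t : ℝ, HasDerivAt (fun s => cos (ω * s)) (-(ω * sin (ω * t))) t := by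
    intro t
    have := ((hasDerivAt_id' (x := t)).const_mul ω).cos
    convert this using 1
    ring
  -- integration by parts: ∫ (w₃'' + ω² w₃) sin(ωt) = F L - F 0
  set F : ℝ → ℝ := fun t => deriv w₃ t * sin (ω * t) - ω * w₃ t * cos (ω * t) with hF
  have hFd : ∀ t : ℝ, HasDerivAt F
      ((deriv (deriv w₃) t + ω ^ 2 * w₃ t) * sin (ω * t)) t := by
    intro t
    have h1 : HasDerivAt (deriv w₃) (deriv (deriv w₃) t) t := (hw3'd t).hasDerivAt
    have h2 : HasDerivAt w₃ (deriv w₃ t) t := (hw3d t).hasDerivAt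
    have hd := (h1.mul (hsin t)).sub ((h2.const_mul ω).mul (hcos t))
    rw [hF]
    exact hd.congr_deriv (by ring)
  have hcont1 : Continuous fun t => (deriv (deriv w₃) t + ω ^ 2 * w₃ t) * sin (ω * t) :=
    (hw3''c.add (continuous_const.mul hw3d.continuous)).mul
      (Real.continuous_sin.comp (continuous_const.mul continuous_id))
  have I1 : ∫ t in (0:ℝ)..L, (deriv (deriv w₃) t + ω ^ 2 * w₃ t) * sin (ω * t)
      = F L - F 0 :=
    intervalIntegral.integral_eq_sub_of_hasDerivAt (fun t _ => hFd t)
      (hcont1.intervalIntegrable 0 L)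
  have hFL : F L = 0 := by
    simp only [hF]; rw [hωL]; simp [h3L]
  have hF0 : F 0 = 0 := by
    simp only [hF]; simp [h30]
  -- explicit antiderivative for the right-hand side
  set H : ℝ → ℝ := fun t =>
    (lam0 * (t / 2 - sin (2 * (ω * t)) / (4 * ω)) - D * cos (ω * t) / ω) / c₁₂ with hH
  have hHd : ∀ t : ℝ, HasDerivAt H
      ((lam0 * sin (ω * t) + D) * sin (ω * t) / c₁₂) t := by
    intro t
    have hlin : HasDerivAt (fun s : ℝ => 2 * (ω * s)) (2 * ω) t := by
      have := ((hasDerivAt_id' (x := t)).const_mul ω).const_mul 2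
      exact this.congr_deriv (by ring)
    have hs2 : HasDerivAt (fun s => sin (2 * (ω * s))) (2 * ω * cos (2 * (ω * t))) t := by
      simpa [mul_comm] using hlin.sin
    have ha : HasDerivAt (fun s : ℝ => s / 2) ((1:ℝ) / 2) t := by
      simpa using (hasDerivAt_id' (x := t)).div_const 2
    have h1 : HasDerivAt (fun s : ℝ => s / 2 - sin (2 * (ω * s)) / (4 * ω))
        (1 / 2 - 2 * ω * cos (2 * (ω * t)) / (4 * ω)) t := ha.sub (hs2.div_const (4 * ω))
    have hmain : HasDerivAt H
        ((lam0 * (1 / 2 - 2 * ω * cos (2 * (ω * t)) / (4 * ω))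
          - D * (-(ω * sin (ω * t))) / ω) / c₁₂) t := by
      rw [hH]
      exact ((h1.const_mul lam0).sub (((hcos t).const_mul D).div_const ω)).div_const c₁₂
    convert hmain using 1
    have hsq : sin (ω * t) ^ 2 = 1 / 2 - cos (2 * (ω * t)) / 2 := by
      rw [Real.sin_sq, Real.cos_sq]; ring
    have ha1 : 2 * ω * cos (2 * (ω * t)) / (4 * ω) = cos (2 * (ω * t)) / 2 := by
      field_simp; ring
    have ha2 : D * (-(ω * sin (ω * t))) / ω = -(D * sin (ω * t)) := by
      field_simp
    rw [ha1, ha2, ← hsq]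
    ring
  have hcont2 : Continuous fun t => (lam0 * sin (ω * t) + D) * sin (ω * t) / c₁₂ :=
    (((continuous_const.mul (Real.continuous_sin.comp
        (continuous_const.mul continuous_id))).add continuous_const).mul
      (Real.continuous_sin.comp (continuous_const.mul continuous_id))).div_const c₁₂
  have I2 : ∫ t in (0:ℝ)..L, (lam0 * sin (ω * t) + D) * sin (ω * t) / c₁₂
      = H L - H 0 :=
    intervalIntegral.integral_eq_sub_of_hasDerivAt (fun t _ => hHd t)
      (hcont2.intervalIntegrable 0 L)
  have hHval : H L - H 0 = lam0 * L / (2 * c₁₂) := by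
    have h4 : 2 * (ω * L) = (4:ℕ) * π := by rw [hωL]; push_cast; ring
    have hs4 : sin (2 * (ω * L)) = 0 := by rw [h4]; exact_mod_cast Real.sin_nat_mul_pi 4
    have hc2 : cos (ω * L) = 1 := by rw [hωL]; exact Real.cos_two_pi
    simp only [hH]
    rw [hs4, hc2]
    simp
    field_simp
    ring
  -- the two integrands agree on [0,L]
  have hcongr : ∫ t in (0:ℝ)..L, (deriv (deriv w₃) t + ω ^ 2 * w₃ t) * sin (ω * t)
      = ∫ t in (0:ℝ)..L, (lam0 * sin (ω * t) + D) * sin (ω * t) / c₁₂ := by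
    apply intervalIntegral.integral_congr
    intro t ht
    rw [Set.uIcc_of_le hL.le] at ht
    exact key t ht
  have hz : lam0 * L / (2 * c₁₂) = 0 := by
    rw [← hHval, ← I2, ← hcongr, I1, hFL, hF0, sub_zero]
  have hpos' : 0 < lam0 * L / (2 * c₁₂) := by positivity
  linarith
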